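/- If the involutive panel structure on X is perfect, then for every (ℤ/2)^m-coloring λ the natural (ℤ/2)^m-action on the glue-back construction M(X, λ) is free, i.e. the stabilizer of every point of M(X, λ) is trivial. -/

import Mathlib

open Set Relation

/-- An involutive panel structure on a topological space `X` with `k` panels. -/
structure PanelStructure (X : Type*) [TopologicalSpace X] (k : ℕ) where
  P : Fin k → Set X
  isClosed : ∀ i, IsClosed (P i)
  τ : Fin k → X → X
  continuousOn : ∀ i, ContinuousOn (τ i) (P i)
  mapsTo : ∀ i, Set.MapsTo (τ i) (P i) (P i)
  invol : ∀ i, ∀ x ∈ P i, τ i (τ i x) = x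
  interMapsTo : ∀ i j, Set.MapsTo (τ i) (P i ∩ P j) (P i ∩ P j)
  comm : ∀ i j, ∀ x ∈ P i ∩ P j, τ i (τ j x) = τ j (τ i x)

/-- The additive group `(ℤ/2)^m`, with the discrete topology. -/
abbrev Z2 (m : ℕ) : Type := Fin m → ZMod 2

instance (m : ℕ) : TopologicalSpace (Z2 m) := ⊥
instance (m : ℕ) : DiscreteTopology (Z2 m) := ⟨rfl⟩

variable {X : Type*} [TopologicalSpace X] {k m : ℕ}

/-- The basic gluing relation `(x, g) ∼ (τᵢ x, g + λ i)` for `x ∈ Pᵢ`. -/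
def glueRel (S : PanelStructure X k) {G : Type*} [AddGroup G] (lam : Fin k → G)
    (p q : X × G) : Prop :=
  ∃ i, p.1 ∈ S.P i ∧ q.1 = S.τ i p.1 ∧ q.2 = p.2 + lam i

/-- The equivalence relation generated by the gluing relation. -/
def glueSetoid (S : PanelStructure X k) {G : Type*} [AddGroup G] (lam : Fin k → G) :
    Setoid (X × G) :=
  EqvGen.setoid (glueRel S lam)

/-- The glue-back construction `M(X, λ)`, as a quotient of `X × G`
(with `G` carrying its own topology, discrete in the case `G = Z2 m`). -/
abbrev GlueBack (S : PanelStructure X k) {G : Type*} [AddGroup G] (lam : Fin k → G) :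
    Type _ :=
  Quotient (glueSetoid S lam)

/-- The class `[(x, g)]` in the glue-back construction. -/
abbrev glueMk (S : PanelStructure X k) {G : Type*} [AddGroup G] (lam : Fin k → G)
    (x : X) (g : G) : GlueBack S lam :=
  Quotient.mk (glueSetoid S lam) (x, g)

theorem eqvGen_map_of_map {α : Type*} {r : α → α → Prop} (f : α → α)
    (hf : ∀ a b, r a b → r (f a) (f b)) :
    ∀ {a b : α}, EqvGen r a b → EqvGen r (f a) (f b) := by
  intro a b h
  induction h with
  | rel a b h => exact EqvGen.rel _ _ (hf _ _ h)
  | refl a => exact EqvGen.refl _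
  | symm a b _ ih => exact EqvGen.symm _ _ ih
  | trans a b c _ _ ih₁ ih₂ => exact EqvGen.trans _ _ _ ih₁ ih₂

theorem glueRel_add (S : PanelStructure X k) {G : Type*} [AddGroup G] (lam : Fin k → G)
    (g : G) (a b : X × G) (h : glueRel S lam a b) :
    glueRel S lam (a.1, g + a.2) (b.1, g + b.2) := by
  obtain ⟨i, h₁, h₂, h₃⟩ := h
  exact ⟨i, h₁, h₂, by rw [h₃, add_assoc]⟩

/-- The natural action of `G` on the glue-back construction:
`g · [(x, g₀)] = [(x, g + g₀)]`. -/
def glueAct (S : PanelStructure X k) {G : Type*} [AddGroup G] (lam : Fin k → G) (g : G) :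
    GlueBack S lam → GlueBack S lam :=
  Quotient.map (fun p => (p.1, g + p.2))
    (fun a b (hab : EqvGen (glueRel S lam) a b) =>
      show EqvGen (glueRel S lam) _ _ from
        eqvGen_map_of_map (fun p => (p.1, g + p.2)) (glueRel_add S lam g) hab)

theorem glueAct_mk (S : PanelStructure X k) {G : Type*} [AddGroup G] (lam : Fin k → G)
    (g : G) (x : X) (g₀ : G) :
    glueAct S lam g (glueMk S lam x g₀) = glueMk S lam x (g + g₀) := rfl

theorem glueAct_zero (S : PanelStructure X k) {G : Type*} [AddGroup G] (lam : Fin k → G)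
    (p : GlueBack S lam) : glueAct S lam 0 p = p := by
  induction p using Quotient.ind with
  | _ a =>
    show Quotient.mk _ (a.1, 0 + a.2) = Quotient.mk _ a
    rw [zero_add]

theorem glueAct_add (S : PanelStructure X k) {G : Type*} [AddGroup G] (lam : Fin k → G)
    (g h : G) (p : GlueBack S lam) :
    glueAct S lam (g + h) p = glueAct S lam g (glueAct S lam h p) := by
  induction p using Quotient.ind with
  | _ a =>
    show Quotient.mk _ (a.1, (g + h) + a.2) = Quotient.mk _ (a.1, g + (h + a.2))
    rw [add_assoc]

/-- Iterated application of the involutions: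
`τ_{i_s}^{ε_s} ∘ ⋯ ∘ τ_{i_1}^{ε_1}` with the indices taken in increasing order. -/
def applyPanels (S : PanelStructure X k) (ε : Fin k → Bool) (x : X) : X :=
  (List.finRange k).foldl (fun y i => if ε i then S.τ i y else y) x

/-- An involutive panel structure is *perfect* if every point lying on exactly `s`
panels has exactly `2^s` duplicate points. -/
def IsPerfect (S : PanelStructure X k) : Prop :=
  ∀ x : X,
    {y : X | ∃ ε : Fin k → Bool, (∀ i, ε i = true → x ∈ S.P i) ∧
        y = applyPanels S ε x}.ncard
      = 2 ^ ({i : Fin k | x ∈ S.P i}.ncard)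

/-! ### Auxiliary lemmas for the freeness theorem -/

/-- Key structural lemma: panel membership is preserved by the involutions.
If `x ∈ P j` and `τ j x ∈ P i`, then already `x ∈ P i`. -/
theorem panel_mem_of_tau_mem (S : PanelStructure X k) {i j : Fin k} {x : X}
    (hx : x ∈ S.P j) (hy : S.τ j x ∈ S.P i) : x ∈ S.P i := by
  have hyj : S.τ j x ∈ S.P j := S.mapsTo j hx
  have hz : S.τ i (S.τ j x) ∈ S.P i ∩ S.P j := S.interMapsTo i j ⟨hy, hyj⟩
  have hw : S.τ j (S.τ i (S.τ j x)) ∈ S.P j ∩ S.P i := S.interMapsTo j i ⟨hz.2, hz.1⟩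
  have hc := S.comm i j _ hz
  rw [S.invol i _ hy, S.invol j _ hx] at hc
  rw [← hc]
  exact S.mapsTo i hw.2

theorem mem_iff_of_tau (S : PanelStructure X k) {i : Fin k} {x : X} (hx : x ∈ S.P i)
    (j : Fin k) : S.τ i x ∈ S.P j ↔ x ∈ S.P j :=
  ⟨fun h => panel_mem_of_tau_mem S hx h, fun h => (S.interMapsTo i j ⟨hx, h⟩).2⟩

/-- The single step of `applyPanels`. -/
def pstep (S : PanelStructure X k) (ε : Fin k → Bool) : X → Fin k → X :=
  fun y i => if ε i then S.τ i y else y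

theorem applyPanels_eq_foldl (S : PanelStructure X k) (ε : Fin k → Bool) (x : X) :
    applyPanels S ε x = (List.finRange k).foldl (pstep S ε) x := rfl

theorem foldl_pstep_congr (S : PanelStructure X k) :
    ∀ (l : List (Fin k)) (ε ε' : Fin k → Bool) (x : X),
      (∀ i ∈ l, ε i = ε' i) → l.foldl (pstep S ε) x = l.foldl (pstep S ε') x := by
  intro l
  induction l with
  | nil => intro ε ε' x _; rfl
  | cons a t ih =>
    intro ε ε' x h
    have ha : ε a = ε' a := h a (List.mem_cons_self)
    show t.foldl (pstep S ε) (pstep S ε x a) = t.foldl (pstep S ε') (pstep S ε' x a)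
    have : pstep S ε x a = pstep S ε' x a := by unfold pstep; rw [ha]
    rw [this]
    exact ih ε ε' _ (fun i hi => h i (List.mem_cons_of_mem a hi))

theorem sameI_tau (S : PanelStructure X k) {x₀ x : X} {i : Fin k}
    (h : ∀ j, x ∈ S.P j ↔ x₀ ∈ S.P j) (hi : x₀ ∈ S.P i) :
    ∀ j, S.τ i x ∈ S.P j ↔ x₀ ∈ S.P j :=
  fun j => (mem_iff_of_tau S ((h i).2 hi) j).trans (h j)

theorem sameI_pstep (S : PanelStructure X k) {x₀ x : X} {ε : Fin k → Bool} (a : Fin k)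
    (h : ∀ j, x ∈ S.P j ↔ x₀ ∈ S.P j) (hok : ∀ i, ε i = true → x₀ ∈ S.P i) :
    ∀ j, pstep S ε x a ∈ S.P j ↔ x₀ ∈ S.P j := by
  unfold pstep
  by_cases ha : ε a = true
  · rw [if_pos ha]; exact sameI_tau S h (hok a ha)
  · rw [if_neg ha]; exact h

theorem foldl_pstep_sameI (S : PanelStructure X k) {x₀ : X} :
    ∀ (l : List (Fin k)) (ε : Fin k → Bool) (x : X),
      (∀ j, x ∈ S.P j ↔ x₀ ∈ S.P j) → (∀ i, ε i = true → x₀ ∈ S.P i) →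
      ∀ j, l.foldl (pstep S ε) x ∈ S.P j ↔ x₀ ∈ S.P j := by
  intro l
  induction l with
  | nil => intro ε x h _ j; exact h j
  | cons a t ih =>
    intro ε x h hok j
    exact ih ε (pstep S ε x a) (sameI_pstep S a h hok) hok j

theorem foldl_pstep_comm (S : PanelStructure X k) {x₀ : X} {i : Fin k} (hi : x₀ ∈ S.P i) :
    ∀ (l : List (Fin k)) (ε : Fin k → Bool) (x : X),
      (∀ j, x ∈ S.P j ↔ x₀ ∈ S.P j) → (∀ j, ε j = true → x₀ ∈ S.P j) →
      S.τ i (l.foldl (pstep S ε) x) = l.foldl (pstep S ε) (S.τ i x) := by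
  intro l
  induction l with
  | nil => intro ε x _ _; rfl
  | cons a t ih =>
    intro ε x h hok
    show S.τ i (t.foldl (pstep S ε) (pstep S ε x a))
        = t.foldl (pstep S ε) (pstep S ε (S.τ i x) a)
    by_cases ha : ε a = true
    · have hxa : x ∈ S.P a := (h a).2 (hok a ha)
      have hxi : x ∈ S.P i := (h i).2 hi
      have hcomm : S.τ i (S.τ a x) = S.τ a (S.τ i x) := S.comm i a x ⟨hxi, hxa⟩
      have h1 : pstep S ε x a = S.τ a x := by unfold pstep; rw [if_pos ha]
      have h2 : pstep S ε (S.τ i x) a = S.τ a (S.τ i x) := by unfold pstep; rw [if_pos ha]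
      rw [h1, h2, ← hcomm]
      exact ih ε (S.τ a x) (sameI_tau S h (hok a ha)) hok
    · have h1 : pstep S ε x a = x := by unfold pstep; rw [if_neg ha]
      have h2 : pstep S ε (S.τ i x) a = S.τ i x := by unfold pstep; rw [if_neg ha]
      rw [h1, h2]
      exact ih ε x h hok

theorem foldl_pstep_flip (S : PanelStructure X k) {x₀ : X} {i : Fin k} (hi : x₀ ∈ S.P i) :
    ∀ (l : List (Fin k)), l.Nodup → i ∈ l → ∀ (ε : Fin k → Bool) (x : X),
      (∀ j, x ∈ S.P j ↔ x₀ ∈ S.P j) → (∀ j, ε j = true → x₀ ∈ S.P j) →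
      S.τ i (l.foldl (pstep S ε) x) = l.foldl (pstep S (Function.update ε i (!ε i))) x := by
  intro l
  induction l with
  | nil => intro _ hmem; exact absurd hmem List.not_mem_nil
  | cons a t ih =>
    intro hnd hmem ε x h hok
    have hnd' : t.Nodup := hnd.of_cons
    by_cases hai : a = i
    · subst hai
      have hant : a ∉ t := (List.nodup_cons.1 hnd).1
      show S.τ a (t.foldl (pstep S ε) (pstep S ε x a))
          = t.foldl (pstep S (Function.update ε a (!ε a))) (pstep S (Function.update ε a (!ε a)) x a)
      have hsame : ∀ j, pstep S ε x a ∈ S.P j ↔ x₀ ∈ S.P j := sameI_pstep S a h hok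
      rw [foldl_pstep_comm S hi t ε (pstep S ε x a) hsame hok]
      have hkey : S.τ a (pstep S ε x a) = pstep S (Function.update ε a (!ε a)) x a := by
        unfold pstep
        rw [Function.update_self]
        by_cases ha : ε a = true
        · rw [if_pos ha, ha]
          simp only [Bool.not_true, if_neg]
          exact S.invol a x ((h a).2 hi)
        · have ha' : ε a = false := Bool.eq_false_iff.2 ha
          rw [if_neg ha, ha']
          simp
      rw [hkey]
      exact foldl_pstep_congr S t ε (Function.update ε a (!ε a)) _
        (fun j hj => (Function.update_of_ne (fun hja => hant (by rwa [hja] at hj)) _ ε).symm)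
    · have hit : i ∈ t := by
        rcases List.mem_cons.1 hmem with h' | h'
        · exact absurd h'.symm hai
        · exact h'
      show S.τ i (t.foldl (pstep S ε) (pstep S ε x a))
          = t.foldl (pstep S (Function.update ε i (!ε i))) (pstep S (Function.update ε i (!ε i)) x a)
      have hstep : pstep S (Function.update ε i (!ε i)) x a = pstep S ε x a := by
        unfold pstep
        rw [Function.update_of_ne hai]
      rw [hstep]
      exact ih hnd' hit ε (pstep S ε x a) (sameI_pstep S a h hok) hok

theorem foldl_pstep_false (S : PanelStructure X k) :
    ∀ (l : List (Fin k)) (x : X), l.foldl (pstep S (fun _ => false)) x = x := by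
  intro l
  induction l with
  | nil => intro x; rfl
  | cons a t ih =>
    intro x
    show t.foldl _ (pstep S (fun _ => false) x a) = x
    have : pstep S (fun _ => false) x a = x := by unfold pstep; simp
    rw [this]; exact ih x

/-- The coloring sum attached to a selection `ε` of panels. -/
def psum (lam : Fin k → Z2 m) (ε : Fin k → Bool) : Z2 m :=
  ∑ i, if ε i = true then lam i else 0

theorem z2_add_self (a : Z2 m) : a + a = 0 := by
  funext i
  have h : ∀ b : ZMod 2, b + b = 0 := by decide
  simp only [Pi.add_apply, Pi.zero_apply]
  exact h (a i)

theorem psum_update (lam : Fin k → Z2 m) (ε : Fin k → Bool) (i : Fin k) :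
    psum lam (Function.update ε i (!ε i)) = psum lam ε + lam i := by
  classical
  unfold psum
  have h1 : ∑ j, (if Function.update ε i (!ε i) j = true then lam j else 0)
      = (if (!ε i) = true then lam i else 0)
        + ∑ j ∈ Finset.univ.erase i, (if ε j = true then lam j else 0) := by
    rw [← Finset.add_sum_erase _ _ (Finset.mem_univ i), Function.update_self]
    congr 1
    apply Finset.sum_congr rfl
    intro j hj
    rw [Function.update_of_ne (Finset.mem_erase.1 hj).1]
  have h2 : ∑ j, (if ε j = true then lam j else 0)
      = (if ε i = true then lam i else 0)
        + ∑ j ∈ Finset.univ.erase i, (if ε j = true then lam j else 0) := by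
    rw [← Finset.add_sum_erase _ _ (Finset.mem_univ i)]
  rw [h1, h2]
  by_cases hb : ε i = true
  · rw [hb]
    simp only [Bool.not_true, Bool.false_eq_true, reduceIte, zero_add]
    rw [add_comm (lam i), add_assoc, z2_add_self, add_zero]
  · have hb' : ε i = false := Bool.eq_false_iff.2 hb
    rw [hb']
    simp only [Bool.not_false, Bool.false_eq_true, reduceIte, zero_add]
    exact add_comm _ _

/-- The map `ε ↦ applyPanels S ε x₀` is injective on admissible selections,
as a consequence of perfectness. -/
theorem applyPanels_injOn (S : PanelStructure X k) (hS : IsPerfect S) (x₀ : X) :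
    Set.InjOn (fun ε => applyPanels S ε x₀)
      {ε : Fin k → Bool | ∀ i, ε i = true → x₀ ∈ S.P i} := by
  classical
  set E : Set (Fin k → Bool) := {ε | ∀ i, ε i = true → x₀ ∈ S.P i} with hE
  have himg : {y : X | ∃ ε : Fin k → Bool, (∀ i, ε i = true → x₀ ∈ S.P i) ∧
      y = applyPanels S ε x₀} = (fun ε => applyPanels S ε x₀) '' E := by
    ext y
    constructor
    · rintro ⟨ε, h1, h2⟩; exact ⟨ε, h1, h2.symm⟩
    · rintro ⟨ε, h1, h2⟩; exact ⟨ε, h1, h2.symm⟩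
  have hEcard : E.ncard = 2 ^ ({i : Fin k | x₀ ∈ S.P i}.ncard) := by
    rw [← Nat.card_coe_set_eq, ← Nat.card_coe_set_eq]
    have e : E ≃ ({i : Fin k | x₀ ∈ S.P i} → Bool) :=
      { toFun := fun ε i => (ε : Fin k → Bool) i.1
        invFun := fun f => ⟨fun i => if h : x₀ ∈ S.P i then f ⟨i, h⟩ else false, by
          intro i hi
          by_cases h : x₀ ∈ S.P i
          · exact h
          · simp [h] at hi⟩
        left_inv := by
          rintro ⟨ε, hε⟩
          apply Subtype.ext
          funext i
          by_cases h : x₀ ∈ S.P i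
          · simp [h]
          · simp only [dif_neg h]
            cases hb : ε i with
            | false => rfl
            | true => exact absurd (hε i hb) h
        right_inv := by
          intro f
          funext i
          have h : x₀ ∈ S.P i.1 := i.2
          show (if h : x₀ ∈ S.P i.1 then f ⟨i.1, h⟩ else false) = f i
          rw [dif_pos h] }
    rw [Nat.card_congr e, Nat.card_fun]
    congr 1
    rw [Nat.card_eq_fintype_card, Fintype.card_bool]
  have hfin : E.Finite := Set.toFinite E
  apply Set.injOn_of_ncard_image_eq _ hfin
  rw [← himg, hS x₀, hEcard]

/-- The invariant preserved along the gluing relation, anchored at `(x₀, g₀)`. -/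
def GlueInv (S : PanelStructure X k) (lam : Fin k → Z2 m) (x₀ : X) (g₀ : Z2 m)
    (p : X × Z2 m) : Prop :=
  (∀ j, p.1 ∈ S.P j ↔ x₀ ∈ S.P j) ∧
  ∃ ε : Fin k → Bool, (∀ i, ε i = true → x₀ ∈ S.P i) ∧
    p.1 = applyPanels S ε x₀ ∧ p.2 = g₀ + psum lam ε

theorem glueInv_step (S : PanelStructure X k) (lam : Fin k → Z2 m) (x₀ : X) (g₀ : Z2 m)
    {p : X × Z2 m} {i : Fin k} (h : GlueInv S lam x₀ g₀ p) (hi : p.1 ∈ S.P i) :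
    GlueInv S lam x₀ g₀ (S.τ i p.1, p.2 + lam i) := by
  obtain ⟨h1, ε, hε, hx, hg⟩ := h
  have hix₀ : x₀ ∈ S.P i := (h1 i).1 hi
  refine ⟨fun j => (mem_iff_of_tau S hi j).trans (h1 j),
    Function.update ε i (!ε i), ?_, ?_, ?_⟩
  · intro j hj
    by_cases hji : j = i
    · exact hji ▸ hix₀
    · rw [Function.update_of_ne hji] at hj
      exact hε j hj
  · show S.τ i p.1 = applyPanels S (Function.update ε i (!ε i)) x₀
    rw [hx, applyPanels_eq_foldl, applyPanels_eq_foldl]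
    exact foldl_pstep_flip S hix₀ (List.finRange k) (List.nodup_finRange k)
      (List.mem_finRange i) ε x₀ (fun j => Iff.rfl) hε
  · show p.2 + lam i = g₀ + psum lam (Function.update ε i (!ε i))
    rw [hg, psum_update, add_assoc]

theorem glueInv_iff_of_eqvGen (S : PanelStructure X k) (lam : Fin k → Z2 m)
    (x₀ : X) (g₀ : Z2 m) {a b : X × Z2 m} (h : EqvGen (glueRel S lam) a b) :
    GlueInv S lam x₀ g₀ a ↔ GlueInv S lam x₀ g₀ b := by
  induction h with
  | rel a b hab =>
    obtain ⟨i, hi, h1, h2⟩ := hab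
    constructor
    · intro ha
      have hb : b = (S.τ i a.1, a.2 + lam i) := Prod.ext h1 h2
      rw [hb]
      exact glueInv_step S lam x₀ g₀ ha hi
    · intro hb
      have hb1i : b.1 ∈ S.P i := h1 ▸ S.mapsTo i hi
      have key := glueInv_step S lam x₀ g₀ hb hb1i
      have ha : a = (S.τ i b.1, b.2 + lam i) := by
        apply Prod.ext
        · show a.1 = S.τ i b.1
          rw [h1]
          exact (S.invol i a.1 hi).symm
        · show a.2 = b.2 + lam i
          rw [h2, add_assoc, z2_add_self, add_zero]
      rw [ha]
      exact key
  | refl a => exact Iff.rfl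
  | symm a b _ ih => exact ih.symm
  | trans a b c _ _ ih₁ ih₂ => exact ih₁.trans ih₂

/-- If the involutive panel structure on `X` is perfect, then for every
`(ℤ/2)^m`-coloring `λ` the natural `(ℤ/2)^m`-action on `M(X, λ)` is free. -/
theorem glueBack_action_free_of_isPerfect (S : PanelStructure X k) (hS : IsPerfect S)
    (lam : Fin k → Z2 m) :
    ∀ (g : Z2 m) (p : GlueBack S lam), glueAct S lam g p = p → g = 0 := by
  intro g p
  induction p using Quotient.ind with
  | _ a =>
    obtain ⟨x₀, g₀⟩ := a
    intro hp
    have h : EqvGen (glueRel S lam) (x₀, g + g₀) (x₀, g₀) := Quotient.exact hp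
    have base : GlueInv S lam x₀ g₀ (x₀, g₀) := by
      refine ⟨fun j => Iff.rfl, fun _ => false, by simp, ?_, ?_⟩
      · show x₀ = applyPanels S (fun _ => false) x₀
        rw [applyPanels_eq_foldl, foldl_pstep_false]
      · show g₀ = g₀ + psum lam (fun _ => false)
        simp [psum]
    have hinv : GlueInv S lam x₀ g₀ (x₀, g + g₀) :=
      (glueInv_iff_of_eqvGen S lam x₀ g₀ h).mpr base
    obtain ⟨_, ε, hε, hx, hg⟩ := hinv
    have hεfalse : ε = fun _ => false := by
      apply applyPanels_injOn S hS x₀ hε (by intro i hi; exact absurd hi (by simp))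
      show applyPanels S ε x₀ = applyPanels S (fun _ => false) x₀
      rw [applyPanels_eq_foldl (S := S) (ε := fun _ => false), foldl_pstep_false, ← hx]
    rw [hεfalse] at hg
    have hg2 : g + g₀ = g₀ + psum lam (fun _ => false) := hg
    have hg' : g + g₀ = g₀ := by
      rw [hg2]
      simp [psum]
    have : g + g₀ = 0 + g₀ := by rw [zero_add]; exact hg'
    exact add_right_cancel this
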